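/- Let J ≥ 1 and let x_1,…,x_J be real numbers with x_i ≥ 1 for all i and (x_1,…,x_J) ≠ (1,…,1). Then the real symmetric matrix A_J^+(x_1,…,x_J) is negative definite. (Claim established in the proof of Lemma 7.7(c)) -/

import Mathlib

open Matrix

/-- The `J × J` real symmetric matrix `A_J^ε(x₁, …, x_J)` (vertices `0`-indexed):
`A_J^ε = -2 ∑ᵢ xᵢ E_{i,i} + ∑_{i=1}^{J-1} (E_{i,i+1} + E_{i+1,i}) + ε (E_{1,J} + E_{J,1})`. -/
def matA (J : ℕ) (ε : ℝ) (x : ℕ → ℝ) : Matrix (Fin J) (Fin J) ℝ :=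
  Matrix.of fun i j =>
    (if (i : ℕ) = (j : ℕ) then -2 * x (i : ℕ) else 0)
    + (if (i : ℕ) + 1 = (j : ℕ) ∨ (j : ℕ) + 1 = (i : ℕ) then 1 else 0)
    + (if (i : ℕ) = 0 ∧ (j : ℕ) = J - 1 then ε else 0)
    + (if (j : ℕ) = 0 ∧ (i : ℕ) = J - 1 then ε else 0)

/-- A real matrix is negative definite if it is symmetric (Hermitian) and the associated
quadratic form is negative on all nonzero vectors. -/
def Matrix.IsNegDef {n : Type*} [Fintype n] (M : Matrix n n ℝ) : Prop :=
  M.IsHermitian ∧ ∀ v : n → ℝ, v ≠ 0 → v ⬝ᵥ M.mulVec v < 0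

lemma matA_cyclic (K : ℕ) (x : ℕ → ℝ) :
    matA (K+1) 1 x = Matrix.of fun i j : Fin (K+1) =>
      (if i = j then -2 * x (i : ℕ) else 0)
      + (if j = i + 1 then 1 else 0) + (if i = j + 1 then 1 else 0) := by
  ext i j
  have hi := i.isLt
  have hj := j.isLt
  have h1 : (j = i + 1) ↔ ((j : ℕ) = ((i : ℕ) + 1 % (K+1)) % (K+1)) := by
    rw [Fin.ext_iff, Fin.val_add, Fin.val_one']
  have h2 : (i = j + 1) ↔ ((i : ℕ) = ((j : ℕ) + 1 % (K+1)) % (K+1)) := by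
    rw [Fin.ext_iff, Fin.val_add, Fin.val_one']
  have h3 : (i = j) ↔ ((i : ℕ) = (j : ℕ)) := Fin.ext_iff
  rcases Nat.eq_or_lt_of_le (Nat.one_le_iff_ne_zero.mpr (Nat.succ_ne_zero K)) with hK | hK
  · -- K + 1 = 1
    have hK0 : K = 0 := by omega
    subst hK0
    have hi0 : (i : ℕ) = 0 := by omega
    have hj0 : (j : ℕ) = 0 := by omega
    simp only [matA, Matrix.of_apply, hi0, hj0]
    have hij : i = j := by omega
    have h1' : j = i + 1 := by omega
    have h2' : i = j + 1 := by omega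
    rw [if_pos hij, if_pos h1', if_pos h2']
    norm_num
  · -- K + 1 ≥ 2
    have hmod : 1 % (K+1) = 1 := Nat.mod_eq_of_lt (by omega)
    rw [hmod] at h1 h2
    have e1 : ((i : ℕ) + 1) % (K+1) = if (i:ℕ) = K then 0 else (i:ℕ)+1 := by
      split
      · next h => rw [h]; exact Nat.mod_self (K+1)
      · exact Nat.mod_eq_of_lt (by omega)
    have e2 : ((j : ℕ) + 1) % (K+1) = if (j:ℕ) = K then 0 else (j:ℕ)+1 := by
      split
      · next h => rw [h]; exact Nat.mod_self (K+1)
      · exact Nat.mod_eq_of_lt (by omega)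
    simp only [matA, Matrix.of_apply, h1, h2, h3, e1, e2, Nat.add_sub_cancel]
    clear h1 h2 h3 e1 e2
    split_ifs <;> first | (exfalso; omega) | norm_num | ring

lemma shift_sum (K : ℕ) (f : Fin (K+1) → ℝ) : ∑ i, f (i+1) = ∑ i, f i :=
  Fintype.sum_equiv (Equiv.addRight 1) _ _ (fun _ => rfl)

lemma matA_quad (K : ℕ) (x : ℕ → ℝ) (v : Fin (K+1) → ℝ) :
    v ⬝ᵥ (matA (K+1) 1 x).mulVec v
      = -(∑ i, (v i - v (i+1))^2) - 2 * ∑ i : Fin (K+1), (x (i:ℕ) - 1) * v i ^ 2 := by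
  have hmv : ∀ i : Fin (K+1), (matA (K+1) 1 x).mulVec v i
      = -2 * x (i:ℕ) * v i + v (i+1) + v (i-1) := by
    intro i
    rw [matA_cyclic]
    simp only [Matrix.mulVec, Matrix.of_apply, dotProduct]
    have hrw : ∀ j : Fin (K+1), (i = j + 1) ↔ (j = i - 1) := by
      intro j
      constructor
      · intro h; rw [h]; abel
      · intro h; rw [h]; abel
    simp only [hrw]
    simp only [add_mul, ite_mul, one_mul, zero_mul, Finset.sum_add_distrib,
      Finset.sum_ite_eq, Finset.sum_ite_eq', Finset.mem_univ, if_true]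
  rw [dotProduct]
  simp only [hmv]
  have expand : ∑ i : Fin (K+1), v i * (-2 * x (i:ℕ) * v i + v (i+1) + v (i-1))
      = -2 * ∑ i : Fin (K+1), x (i:ℕ) * v i ^ 2 + ∑ i : Fin (K+1), v i * v (i+1)
        + ∑ i : Fin (K+1), v i * v (i-1) := by
    rw [Finset.mul_sum]
    rw [← Finset.sum_add_distrib, ← Finset.sum_add_distrib]
    exact Finset.sum_congr rfl (fun i _ => by ring)
  rw [expand]
  have h1 : ∑ i : Fin (K+1), v i * v (i-1) = ∑ i : Fin (K+1), v (i+1) * v i := by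
    rw [← shift_sum K (fun i => v i * v (i-1))]
    exact Finset.sum_congr rfl (fun i _ => by rw [add_sub_cancel_right])
  have h2 : ∑ i : Fin (K+1), (v (i+1))^2 = ∑ i : Fin (K+1), (v i)^2 :=
    shift_sum K (fun i => (v i)^2)
  have h3 : ∑ i : Fin (K+1), (v i - v (i+1))^2
      = ∑ i : Fin (K+1), ((v i)^2 + (v (i+1))^2 - 2 * (v i * v (i+1))) :=
    Finset.sum_congr rfl (fun i _ => by ring)
  have h4 : ∑ i : Fin (K+1), (x (i:ℕ) - 1) * v i ^ 2
      = ∑ i : Fin (K+1), (x (i:ℕ) * v i ^ 2) - ∑ i : Fin (K+1), (v i)^2 := by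
    rw [← Finset.sum_sub_distrib]
    exact Finset.sum_congr rfl (fun i _ => by ring)
  rw [h1, h3, h4]
  rw [Finset.sum_sub_distrib, Finset.sum_add_distrib, h2, ← Finset.mul_sum]
  have h5 : ∑ i : Fin (K+1), v (i+1) * v i = ∑ i : Fin (K+1), v i * v (i+1) :=
    Finset.sum_congr rfl (fun i _ => by ring)
  rw [h5]
  ring

lemma matA_symm_entry (J : ℕ) (ε : ℝ) (x : ℕ → ℝ) (i j : Fin J) :
    matA J ε x j i = matA J ε x i j := by
  rcases eq_or_ne (i : ℕ) (j : ℕ) with h | h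
  · simp only [matA, Matrix.of_apply, h]
  · simp only [matA, Matrix.of_apply]
    split_ifs <;> first | (exfalso; omega) | ring

open Fin.NatCast in
theorem matA_pos_negDef' (J : ℕ) (hJ : 1 ≤ J) (x : ℕ → ℝ)
    (hx : ∀ i < J, 1 ≤ x i) (hne : ∃ i < J, x i ≠ 1) :
    (matA J 1 x).IsHermitian ∧ ∀ v : Fin J → ℝ, v ≠ 0 → v ⬝ᵥ (matA J 1 x).mulVec v < 0 := by
  obtain ⟨K, rfl⟩ : ∃ K, J = K + 1 := ⟨J - 1, by omega⟩
  constructor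
  · ext i j
    rw [Matrix.conjTranspose_apply, star_trivial]
    exact matA_symm_entry _ _ _ i j
  · intro v hv
    rw [matA_quad]
    set S1 := ∑ i : Fin (K+1), (v i - v (i+1))^2 with hS1def
    set S2 := ∑ i : Fin (K+1), (x (i:ℕ) - 1) * v i ^ 2 with hS2def
    have hS1 : 0 ≤ S1 := Finset.sum_nonneg (fun i _ => sq_nonneg _)
    have hS2 : 0 ≤ S2 := Finset.sum_nonneg (fun i _ => by
      have := hx (i:ℕ) i.isLt
      have := sq_nonneg (v i)
      nlinarith)
    rcases lt_or_eq_of_le hS1 with h1 | h1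
    · linarith
    rcases lt_or_eq_of_le hS2 with h2 | h2
    · linarith
    exfalso
    -- S1 = 0 and S2 = 0; derive v = 0
    have hstep : ∀ i : Fin (K+1), v i = v (i+1) := by
      intro i
      have := (Finset.sum_eq_zero_iff_of_nonneg
        (fun i (_ : i ∈ Finset.univ) => sq_nonneg (v i - v (i+1)))).mp h1.symm i (Finset.mem_univ i)
      have := sq_eq_zero_iff.mp this
      linarith [this]
    have hconst : ∀ (n : ℕ) (i : Fin (K+1)), v (i + (n : Fin (K+1))) = v i := by
      intro n
      induction n with
      | zero => intro i; simp
      | succ m ih =>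
        intro i
        have hc : ((m + 1 : ℕ) : Fin (K+1)) = (m : Fin (K+1)) + 1 := by push_cast; ring
        rw [hc, ← add_assoc, ← hstep (i + (m : Fin (K+1))), ih]
    have hall : ∀ i j : Fin (K+1), v i = v j := by
      intro i j
      have h := hconst ((j - i : Fin (K+1)) : ℕ) i
      rw [Fin.cast_val_eq_self] at h
      have : i + (j - i) = j := by abel
      rw [this] at h
      exact h.symm
    obtain ⟨k, hk, hxk⟩ := hne
    have hxk1 : 1 < x k := lt_of_le_of_ne (hx k hk) (Ne.symm hxk)
    have hterm : (x ((⟨k, hk⟩ : Fin (K+1)) : ℕ) - 1) * v ⟨k, hk⟩ ^ 2 = 0 := by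
      exact (Finset.sum_eq_zero_iff_of_nonneg (fun i (_ : i ∈ Finset.univ) => by
        have := hx (i:ℕ) i.isLt
        have := sq_nonneg (v i)
        nlinarith)).mp h2.symm ⟨k, hk⟩ (Finset.mem_univ _)
    have hvk : v ⟨k, hk⟩ = 0 := by
      simp only [Fin.val_mk] at hterm
      have hpos : x k - 1 > 0 := by linarith
      have := mul_eq_zero.mp hterm
      rcases this with h | h
      · linarith
      · exact pow_eq_zero_iff (by norm_num) |>.mp h
    apply hv
    funext i
    rw [hall i ⟨k, hk⟩, hvk]
    rfl

/-- Claim from the proof of Lemma 7.7(c): if all `xᵢ ≥ 1` and not all `xᵢ = 1`,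
then `A_J^+(x₁,…,x_J)` is negative definite. -/
theorem matA_pos_negDef (J : ℕ) (hJ : 1 ≤ J) (x : ℕ → ℝ)
    (hx : ∀ i < J, 1 ≤ x i) (hne : ∃ i < J, x i ≠ 1) :
    (matA J 1 x).IsNegDef := by
  exact matA_pos_negDef' J hJ x hx hne
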